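/- Let A ∈ L(V,V*) satisfy ⟨Au,u⟩ ≥ μ_V‖u‖²_V for all u ∈ V. Then for every P ∈ 𝒱 = HS(V*,H) ∩ HS(H,V), one has ⟨PA, P⟩ ≥ μ_V ‖P‖²_{HS(V*,H)} and ⟨A*P, P⟩ ≥ μ_V ‖P‖²_{HS(H,V)}; in particular ⟨A*P + PA, P⟩ ≥ μ_V ‖P‖²_𝒱. -/

import Mathlib

open scoped RealInnerProductSpace

lemma stmt_10_aux {V : Type*} [NormedAddCommGroup V] [InnerProductSpace ℝ V]
    (A : V →L[ℝ] StrongDual ℝ V) (μV : ℝ)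
    (hA : ∀ u : V, μV * ‖u‖ ^ 2 ≤ A u u)
    (f : ℕ → V) (hsum : Summable fun n => ‖f n‖ ^ 2) :
    μV * ∑' n, ‖f n‖ ^ 2 ≤ ∑' n, A (f n) (f n) := by
  have hAsum : Summable fun n => A (f n) (f n) := by
    apply Summable.of_norm
    apply Summable.of_nonneg_of_le (fun n => norm_nonneg _)
      (fun n => ?_) (hsum.mul_left ‖A‖)
    calc ‖A (f n) (f n)‖ ≤ ‖A (f n)‖ * ‖f n‖ := (A (f n)).le_opNorm _
      _ ≤ ‖A‖ * ‖f n‖ * ‖f n‖ := by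
          gcongr; exact A.le_opNorm _
      _ = ‖A‖ * ‖f n‖ ^ 2 := by ring
  rw [← tsum_mul_left]
  exact Summable.tsum_le_tsum (fun n => hA (f n)) (hsum.mul_left μV) hAsum

/-- Coercivity of the Lyapunov operator on `𝒱 = HS(V*,H) ∩ HS(H,V)`: for a strongly
positive `A : V → V*` and `P ∈ 𝒱` (represented as a Hilbert–Schmidt operator
`P : H → V` together with its adjoint `P' : H → V`, i.e. `⟪jPu, v⟫ = ⟪u, jP'v⟫`),
one has `⟨PA, P⟩ ≥ μ_V ‖P‖²_{HS(V*,H)}` (i.e. `∑ a(P'eₙ, P'eₙ) ≥ μ_V ∑ ‖P'eₙ‖_V²`),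
`⟨A*P, P⟩ ≥ μ_V ‖P‖²_{HS(H,V)}`, and in particular
`⟨A*P + PA, P⟩ ≥ μ_V ‖P‖²_𝒱`. -/
theorem stmt_10 {V H : Type*} [NormedAddCommGroup V] [InnerProductSpace ℝ V] [CompleteSpace V]
    [NormedAddCommGroup H] [InnerProductSpace ℝ H] [CompleteSpace H]
    (j : V →L[ℝ] H) (hjdense : DenseRange j) (hjinj : Function.Injective j)
    (b : HilbertBasis ℕ ℝ H)
    (A : V →L[ℝ] StrongDual ℝ V) (μV : ℝ) (hμ : 0 < μV)
    (hA : ∀ u : V, μV * ‖u‖ ^ 2 ≤ A u u)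
    (P P' : H →L[ℝ] V)
    (hadj : ∀ u v : H, ⟪j (P u), v⟫ = ⟪u, j (P' v)⟫)
    (hPsum : Summable fun n => ‖P (b n)‖ ^ 2)
    (hP'sum : Summable fun n => ‖P' (b n)‖ ^ 2) :
    (μV * ∑' n, ‖P' (b n)‖ ^ 2 ≤ ∑' n, A (P' (b n)) (P' (b n))) ∧
      (μV * ∑' n, ‖P (b n)‖ ^ 2 ≤ ∑' n, A (P (b n)) (P (b n))) ∧
      μV * (∑' n, ‖P (b n)‖ ^ 2 + ∑' n, ‖P' (b n)‖ ^ 2) ≤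
        ∑' n, A (P (b n)) (P (b n)) + ∑' n, A (P' (b n)) (P' (b n)) := by
  have h1 := stmt_10_aux A μV hA (fun n => P' (b n)) hP'sum
  have h2 := stmt_10_aux A μV hA (fun n => P (b n)) hPsum
  exact ⟨h1, h2, by nlinarith⟩
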